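/- Let |Ψ⟩ = c_00|00⟩ + c_01|01⟩ + c_10|10⟩ + c_11|11⟩ be a normalized two-qubit state, and let |u⁺_{A_1}⟩ = cos(α/2)|0⟩ + e^{iφ} sin(α/2)|1⟩ and |v⁺_{B_1}⟩ = cos(β/2)|0⟩ + e^{iξ} sin(β/2)|1⟩ with 0 < α, β < π. If |Ψ⟩ is orthogonal to |u⁺_{A_1}⟩⊗|1⟩ and to |1⟩⊗|v⁺_{B_1}⟩, then there exist c ∈ [0,1] and δ ∈ [0,2π) such that, up to a global phase, c_11 = c, c_01 = −c·e^{−iφ} tan(α/2), c_10 = −c·e^{−iξ} tan(β/2), and c_00 = e^{iδ}·√(1 − c²(1 + tan²(α/2) + tan²(β/2))). -/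

import Mathlib

open Complex Real

lemma orth_coeff_aux (z w : ℂ) (a ph : ℝ) (ha : 0 < a) (ha' : a < Real.pi / 2)
    (h : (starRingEnd ℂ) z * (Real.cos a : ℂ)
        + (starRingEnd ℂ) w * (Complex.exp (Complex.I * ph) * (Real.sin a : ℂ)) = 0) :
    z = -w * Complex.exp (-Complex.I * ph) * (Real.tan a : ℂ) := by
  have hc : Real.cos a > 0 := Real.cos_pos_of_mem_Ioo ⟨by linarith [Real.pi_pos], ha'⟩
  have hc' : (Real.cos a : ℂ) ≠ 0 := Complex.ofReal_ne_zero.mpr (ne_of_gt hc)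
  have h2 := congrArg (starRingEnd ℂ) h
  simp only [map_add, map_mul, Complex.conj_conj, map_zero, ← Complex.exp_conj,
    Complex.conj_I, Complex.conj_ofReal, map_neg] at h2
  have hc2 : Complex.cos (a : ℂ) ≠ 0 := by rw [← Complex.ofReal_cos]; exact hc'
  rw [Real.tan_eq_sin_div_cos, Complex.ofReal_div]
  field_simp [hc2] at h2 ⊢
  linear_combination h2

/-- Any normalized two-qubit state orthogonal to `|u⁺_{A₁}⟩⊗|1⟩` and
`|1⟩⊗|v⁺_{B₁}⟩` has, up to a global phase, the Cabello form of Eq. (7). -/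
theorem cabello_state_characterization
    (c00 c01 c10 c11 : ℂ) (α β φ ξ : ℝ)
    (hα : 0 < α) (hα' : α < Real.pi) (hβ : 0 < β) (hβ' : β < Real.pi)
    (hnorm : ‖c00‖ ^ 2 + ‖c01‖ ^ 2
        + ‖c10‖ ^ 2 + ‖c11‖ ^ 2 = 1)
    (horth1 : (starRingEnd ℂ) c01 * (Real.cos (α / 2) : ℂ)
        + (starRingEnd ℂ) c11 * (Complex.exp (Complex.I * φ) * (Real.sin (α / 2) : ℂ)) = 0)
    (horth2 : (starRingEnd ℂ) c10 * (Real.cos (β / 2) : ℂ)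
        + (starRingEnd ℂ) c11 * (Complex.exp (Complex.I * ξ) * (Real.sin (β / 2) : ℂ)) = 0) :
    ∃ (c δ θ : ℝ), 0 ≤ c ∧ c ≤ 1 ∧ 0 ≤ δ ∧ δ < 2 * Real.pi ∧
      c11 = Complex.exp (Complex.I * θ) * (c : ℂ) ∧
      c01 = Complex.exp (Complex.I * θ) *
        (-(c : ℂ) * Complex.exp (-Complex.I * φ) * (Real.tan (α / 2) : ℂ)) ∧
      c10 = Complex.exp (Complex.I * θ) *
        (-(c : ℂ) * Complex.exp (-Complex.I * ξ) * (Real.tan (β / 2) : ℂ)) ∧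
      c00 = Complex.exp (Complex.I * θ) * (Complex.exp (Complex.I * δ) *
        (Real.sqrt (1 - c ^ 2 * (1 + Real.tan (α / 2) ^ 2 + Real.tan (β / 2) ^ 2)) : ℂ)) := by
  have hα2 : 0 < α / 2 := by linarith
  have hα2' : α / 2 < Real.pi / 2 := by linarith
  have hβ2 : 0 < β / 2 := by linarith
  have hβ2' : β / 2 < Real.pi / 2 := by linarith
  set t1 := Real.tan (α / 2) with ht1
  set t2 := Real.tan (β / 2) with ht2
  have ht1pos : 0 < t1 := Real.tan_pos_of_pos_of_lt_pi_div_two hα2 hα2'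
  have ht2pos : 0 < t2 := Real.tan_pos_of_pos_of_lt_pi_div_two hβ2 hβ2'
  have h01 : c01 = -c11 * Complex.exp (-Complex.I * φ) * (t1 : ℂ) :=
    orth_coeff_aux c01 c11 (α / 2) φ hα2 hα2' horth1
  have h10 : c10 = -c11 * Complex.exp (-Complex.I * ξ) * (t2 : ℂ) :=
    orth_coeff_aux c10 c11 (β / 2) ξ hβ2 hβ2' horth2
  set c := ‖c11‖ with hc
  set θ := Complex.arg c11 with hθ
  have hc11 : c11 = Complex.exp (Complex.I * θ) * (c : ℂ) := by
    rw [mul_comm, mul_comm Complex.I]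
    exact (Complex.norm_mul_exp_arg_mul_I c11).symm
  have habs_e : ∀ r : ℝ, ‖Complex.exp (-Complex.I * r)‖ = 1 := by
    intro r; rw [Complex.norm_exp]; simp
  have habs01 : ‖c01‖ = c * t1 := by
    rw [h01, norm_mul, norm_mul, norm_neg, habs_e, Complex.norm_real, Real.norm_eq_abs,
      abs_of_pos ht1pos, mul_one]
  have habs10 : ‖c10‖ = c * t2 := by
    rw [h10, norm_mul, norm_mul, norm_neg, habs_e, Complex.norm_real, Real.norm_eq_abs,
      abs_of_pos ht2pos, mul_one]
  have hr : ‖c00‖ ^ 2 = 1 - c ^ 2 * (1 + t1 ^ 2 + t2 ^ 2) := by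
    rw [habs01, habs10] at hnorm; ring_nf at hnorm ⊢; linarith
  have hsqrt : Real.sqrt (1 - c ^ 2 * (1 + t1 ^ 2 + t2 ^ 2)) = ‖c00‖ := by
    rw [← hr, Real.sqrt_sq (norm_nonneg _)]
  have h2π : (0 : ℝ) < 2 * Real.pi := by positivity
  set d := Complex.arg c00 - θ with hd
  set δ := d - ⌊d / (2 * Real.pi)⌋ * (2 * Real.pi) with hδ
  have hδ0 : 0 ≤ δ := Int.sub_floor_div_mul_nonneg d h2π
  have hδ1 : δ < 2 * Real.pi := Int.sub_floor_div_mul_lt d h2π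
  have hexpδ : Complex.exp (Complex.I * δ) = Complex.exp (Complex.I * d) := by
    have hone : Complex.exp (((-⌊d / (2 * Real.pi)⌋ : ℤ) : ℂ) * (2 * (Real.pi : ℂ) * Complex.I))
        = 1 := Complex.exp_int_mul_two_pi_mul_I _
    have hsum : Complex.I * (δ : ℂ) =
        Complex.I * (d : ℂ) + ((-⌊d / (2 * Real.pi)⌋ : ℤ) : ℂ) * (2 * (Real.pi : ℂ) * Complex.I) := by
      rw [hδ]; push_cast; ring
    rw [hsum, Complex.exp_add, hone, mul_one]
  refine ⟨c, δ, θ, norm_nonneg _, ?_, hδ0, hδ1, hc11, ?_, ?_, ?_⟩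
  · nlinarith [norm_nonneg c00, norm_nonneg c01, norm_nonneg c10,
      sq_nonneg ‖c00‖, sq_nonneg ‖c01‖, sq_nonneg ‖c10‖]
  · rw [h01, hc11]; ring
  · rw [h10, hc11]; ring
  · rw [hsqrt, hexpδ, ← mul_assoc, ← Complex.exp_add]
    have : Complex.I * (θ : ℂ) + Complex.I * (d : ℂ) = (Complex.arg c00 : ℂ) * Complex.I := by
      rw [hd]; push_cast; ring
    rw [this, mul_comm]
    exact (Complex.norm_mul_exp_arg_mul_I c00).symm
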